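/- Let B and C be finite types with |B| ≥ 2 and |C| ≥ 2. Then for every even permutation φ of C and every clopen subset F ⊆ (ℤ → B), the map ctrl(φ, F) is the underlying map of an element of PAut[B;C]. -/

import Mathlib

open Function

/-- The shift map on `ℤ → A`. -/
def shiftMap (A : Type*) : (ℤ → A) → (ℤ → A) := fun x i => x (i + 1)

/-- The shift map as a permutation of `ℤ → A`. -/
def shiftPerm (A : Type*) : Equiv.Perm (ℤ → A) where
  toFun := shiftMap A
  invFun x i := x (i - 1)
  left_inv x := funext fun i => by simp [shiftMap]
  right_inv x := funext fun i => by simp [shiftMap]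

/-- Finite types carry the discrete topology. -/
instance fintypeDiscreteTopology (A : Type*) [Fintype A] : TopologicalSpace A := ⊥

/-- The automorphism group of the full shift `A^ℤ`: shift-commuting self-homeomorphisms of
`ℤ → A`, as a subgroup of the permutation group of `ℤ → A`. -/
def FullShiftAut (A : Type*) [Fintype A] : Subgroup (Equiv.Perm (ℤ → A)) where
  carrier := { f | Continuous ⇑f ∧ Continuous ⇑f.symm ∧
      ∀ x, f (shiftMap A x) = shiftMap A (f x) }
  one_mem' := ⟨continuous_id, continuous_id, fun _ => rfl⟩
  mul_mem' := by
    rintro f g ⟨hf1, hf2, hf3⟩ ⟨hg1, hg2, hg3⟩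
    refine ⟨?_, ?_, fun x => ?_⟩
    · exact hf1.comp hg1
    · exact hg2.comp hf2
    · show f (g (shiftMap A x)) = shiftMap A (f (g x))
      rw [hg3, hf3]
  inv_mem' := by
    rintro f ⟨hf1, hf2, hf3⟩
    refine ⟨hf2, hf1, fun x => ?_⟩
    apply f.injective
    have h : ∀ y, f (f⁻¹ y) = y := fun y => f.apply_symm_apply y
    rw [h, hf3, h]

/-- The symbol permutation determined by a permutation of the alphabet. -/
def symbolPerm {A : Type*} (π : Equiv.Perm A) : Equiv.Perm (ℤ → A) :=
  Equiv.piCongrRight fun _ => π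

/-- The partial shift on the first track. -/
def partialShift₁ (B C : Type*) : Equiv.Perm (ℤ → B × C) where
  toFun x i := ((x (i + 1)).1, (x i).2)
  invFun x i := ((x (i - 1)).1, (x i).2)
  left_inv x := funext fun i => by simp
  right_inv x := funext fun i => by simp

/-- The partial shift on the second track. -/
def partialShift₂ (B C : Type*) : Equiv.Perm (ℤ → B × C) where
  toFun x i := ((x i).1, (x (i + 1)).2)
  invFun x i := ((x i).1, (x (i - 1)).2)
  left_inv x := funext fun i => by simp
  right_inv x := funext fun i => by simp

/-- `PAut[B;C]`: the subgroup of the automorphism group of `(B × C)^ℤ` generated by the two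
partial shifts and all symbol permutations. -/
def PAut (B C : Type*) : Subgroup (Equiv.Perm (ℤ → B × C)) :=
  Subgroup.closure
    ({partialShift₁ B C, partialShift₂ B C} ∪ Set.range (symbolPerm (A := B × C)))

attribute [local instance] Classical.propDecidable

/-- The controlled symbol permutation `ctrl(φ, F)`: apply `φ` on the second track at position
`j` exactly when the first track, shifted so that position `j` becomes the origin, lies in
`F`. -/
noncomputable def ctrlSymb {B C : Type*} (φ : Equiv.Perm C) (F : Set (ℤ → B)) :
    (ℤ → B × C) → (ℤ → B × C) := fun z j =>
  if (fun t => (z (t + j)).1) ∈ F then ((z j).1, φ (z j).2) else z j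


set_option linter.unusedSectionVars false

namespace Stmt7Aux

open Equiv Equiv.Perm

variable {B C : Type} [Fintype B] [Fintype C]

lemma ctrl_def' (φ : Equiv.Perm C) (F : Set (ℤ → B)) (z : ℤ → B × C) (j : ℤ) :
    ctrlSymb φ F z j =
      ((z j).1, if (fun t => (z (t + j)).1) ∈ F then φ (z j).2 else (z j).2) := by
  unfold ctrlSymb; split_ifs <;> rfl

lemma ctrl_one (F : Set (ℤ → B)) : ctrlSymb (1 : Equiv.Perm C) F = id := by
  funext z j
  simp [ctrl_def']

lemma ctrl_mul (φ ψ : Equiv.Perm C) (F : Set (ℤ → B)) :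
    ctrlSymb φ F ∘ ctrlSymb ψ F = ctrlSymb (φ * ψ) F := by
  funext z j
  by_cases h : (fun t => (z (t + j)).1) ∈ F <;>
    simp [ctrl_def', h]

lemma ctrl_union (φ : Equiv.Perm C) (F G : Set (ℤ → B))
    (hd : ∀ x, x ∈ F → x ∉ G) :
    ctrlSymb φ F ∘ ctrlSymb φ G = ctrlSymb φ (F ∪ G) := by
  funext z j
  by_cases h1 : (fun t => (z (t + j)).1) ∈ F <;>
    by_cases h2 : (fun t => (z (t + j)).1) ∈ G <;>
      first
        | exact absurd h2 (hd _ h1)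
        | simp [ctrl_def', h1, h2, Set.mem_union]

lemma ctrl_comm (φ ψ : Equiv.Perm C) (F G : Set (ℤ → B)) :
    ctrlSymb φ F ∘ ctrlSymb ψ G ∘ ctrlSymb φ⁻¹ F ∘ ctrlSymb ψ⁻¹ G =
      ctrlSymb (φ * ψ * φ⁻¹ * ψ⁻¹) (F ∩ G) := by
  funext z j
  by_cases h1 : (fun t => (z (t + j)).1) ∈ F <;>
    by_cases h2 : (fun t => (z (t + j)).1) ∈ G <;>
      simp [ctrl_def', h1, h2, Set.mem_inter_iff]

/-- Realizability of a controlled permutation inside `PAut`. -/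
def Realizable (φ : Equiv.Perm C) (F : Set (ℤ → B)) : Prop :=
  ∃ f : Equiv.Perm (ℤ → B × C), f ∈ PAut B C ∧ ⇑f = ctrlSymb φ F

lemma real_one (F : Set (ℤ → B)) : Realizable (1 : Equiv.Perm C) F :=
  ⟨1, one_mem _, by rw [ctrl_one]; rfl⟩

lemma real_mul {φ ψ : Equiv.Perm C} {F : Set (ℤ → B)}
    (h1 : Realizable φ F) (h2 : Realizable ψ F) : Realizable (φ * ψ) F := by
  obtain ⟨f, hf, hf'⟩ := h1
  obtain ⟨g, hg, hg'⟩ := h2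
  exact ⟨f * g, mul_mem hf hg, by rw [Equiv.Perm.coe_mul, hf', hg', ctrl_mul]⟩

lemma coe_inv {φ : Equiv.Perm C} {F : Set (ℤ → B)} {f : Equiv.Perm (ℤ → B × C)}
    (hf : ⇑f = ctrlSymb φ F) : ⇑f⁻¹ = ctrlSymb φ⁻¹ F := by
  have key : ⇑f ∘ ctrlSymb φ⁻¹ F = id := by
    rw [hf, ctrl_mul, mul_inv_cancel, ctrl_one]
  funext z
  show f.symm z = ctrlSymb φ⁻¹ F z
  rw [Equiv.symm_apply_eq]
  exact (congrFun key z).symm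

lemma real_inv {φ : Equiv.Perm C} {F : Set (ℤ → B)}
    (h : Realizable φ F) : Realizable φ⁻¹ F := by
  obtain ⟨f, hf, hf'⟩ := h
  exact ⟨f⁻¹, inv_mem hf, coe_inv hf'⟩

lemma real_union {φ : Equiv.Perm C} {F G : Set (ℤ → B)}
    (hd : ∀ x, x ∈ F → x ∉ G)
    (h1 : Realizable φ F) (h2 : Realizable φ G) : Realizable φ (F ∪ G) := by
  obtain ⟨f, hf, hf'⟩ := h1
  obtain ⟨g, hg, hg'⟩ := h2
  exact ⟨f * g, mul_mem hf hg,
    by rw [Equiv.Perm.coe_mul, hf', hg', ctrl_union _ _ _ hd]⟩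

lemma real_comm {φ ψ : Equiv.Perm C} {F G : Set (ℤ → B)}
    (h1 : Realizable φ F) (h2 : Realizable ψ G) :
    Realizable (φ * ψ * φ⁻¹ * ψ⁻¹) (F ∩ G) := by
  obtain ⟨f, hf, hf'⟩ := h1
  obtain ⟨g, hg, hg'⟩ := h2
  refine ⟨f * g * f⁻¹ * g⁻¹,
    mul_mem (mul_mem (mul_mem hf hg) (inv_mem hf)) (inv_mem hg), ?_⟩
  rw [Equiv.Perm.coe_mul, Equiv.Perm.coe_mul, Equiv.Perm.coe_mul, hf', hg',
    coe_inv hf', coe_inv hg', ← ctrl_comm]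
  rfl

lemma real_empty (φ : Equiv.Perm C) : Realizable φ (∅ : Set (ℤ → B)) :=
  ⟨1, one_mem _, by funext z j; simp [ctrl_def']⟩

-- membership of generators
lemma mem_ps1 : partialShift₁ B C ∈ PAut B C :=
  Subgroup.subset_closure (Or.inl (Set.mem_insert _ _))

lemma mem_symbol (π : Equiv.Perm (B × C)) : symbolPerm π ∈ PAut B C :=
  Subgroup.subset_closure (Or.inr ⟨π, rfl⟩)

lemma symbolPerm_apply (π : Equiv.Perm (B × C)) (z : ℤ → B × C) (j : ℤ) :
    symbolPerm π z j = π (z j) := rfl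

lemma ps1_apply (z : ℤ → B × C) (j : ℤ) :
    partialShift₁ B C z j = ((z (j + 1)).1, (z j).2) := rfl

lemma ps1_inv_apply (z : ℤ → B × C) (j : ℤ) :
    (partialShift₁ B C)⁻¹ z j = ((z (j - 1)).1, (z j).2) := rfl

lemma ps1_zpow (k : ℤ) (z : ℤ → B × C) (j : ℤ) :
    ((partialShift₁ B C ^ k) z) j = ((z (j + k)).1, (z j).2) := by
  induction k using Int.induction_on generalizing z j with
  | zero => simp
  | succ i ih =>
      have e : partialShift₁ B C ^ ((i : ℤ) + 1) = partialShift₁ B C ^ (i : ℤ) * partialShift₁ B C :=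
        zpow_add_one _ _
      have e2 : j + ((i : ℤ) + 1) = j + (i : ℤ) + 1 := by ring
      rw [e, Equiv.Perm.mul_apply, ih, ps1_apply, ps1_apply, e2]
  | pred i ih =>
      have e : partialShift₁ B C ^ (-(i : ℤ) - 1) = partialShift₁ B C ^ (-(i : ℤ)) * (partialShift₁ B C)⁻¹ :=
        zpow_sub_one _ _
      have e2 : j + (-(i : ℤ) - 1) = j + -(i : ℤ) - 1 := by ring
      rw [e, Equiv.Perm.mul_apply, ih, ps1_inv_apply, ps1_inv_apply, e2]

lemma real_univ (φ : Equiv.Perm C) : Realizable φ (Set.univ : Set (ℤ → B)) := by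
  refine ⟨symbolPerm (Equiv.prodCongr (Equiv.refl B) φ), mem_symbol _, ?_⟩
  funext z j
  rw [symbolPerm_apply, ctrl_def']
  simp [Prod.map]

/-- The symbol permutation applying `ψ` on the second track iff the first-track symbol is `b`. -/
noncomputable def condPerm (b : B) (ψ : Equiv.Perm C) : Equiv.Perm (B × C) :=
  Equiv.prodShear (Equiv.refl B) (fun b' => if b' = b then ψ else Equiv.refl C)

lemma condPerm_apply (b : B) (ψ : Equiv.Perm C) (p : B × C) :
    condPerm b ψ p = (p.1, if p.1 = b then ψ p.2 else p.2) := by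
  unfold condPerm
  by_cases h : p.1 = b <;> simp [Equiv.prodShear, h]

lemma real_single (k : ℤ) (b : B) (ψ : Equiv.Perm C) :
    Realizable ψ {x : ℤ → B | x k = b} := by
  refine ⟨partialShift₁ B C ^ (-k) * symbolPerm (condPerm b ψ) * partialShift₁ B C ^ k,
    mul_mem (mul_mem (zpow_mem mem_ps1 _) (mem_symbol _)) (zpow_mem mem_ps1 _), ?_⟩
  funext z j
  rw [Equiv.Perm.mul_apply, Equiv.Perm.mul_apply, ps1_zpow, ctrl_def']
  have hmem : ((fun t => (z (t + j)).1) ∈ {x : ℤ → B | x k = b}) = ((z (j + k)).1 = b) := by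
    simp [Set.mem_setOf_eq, add_comm]
  rw [hmem]
  rw [symbolPerm_apply, symbolPerm_apply, condPerm_apply, condPerm_apply]
  have e1 : j + -k + k = j := by ring
  simp [ps1_zpow, e1]


end Stmt7Aux

namespace Stmt7Aux

open Equiv Equiv.Perm

variable {B C : Type} [Fintype B] [Fintype C] [DecidableEq C]

lemma real_threeCycle {c : Equiv.Perm C} (hc : c.IsThreeCycle)
    {F : Set (ℤ → B)} (k : ℤ) (b : B)
    (hF : ∀ ψ' : Equiv.Perm C, ψ' ∈ alternatingGroup C → Realizable ψ' F) :
    Realizable c (F ∩ {x : ℤ → B | x k = b}) := by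
  -- find β conjugating c to c⁻¹
  have hconj : IsConj c c⁻¹ :=
    Equiv.Perm.isConj_of_cycleType_eq (by rw [Equiv.Perm.cycleType_inv])
  obtain ⟨β, hβ'⟩ := isConj_iff.mp hconj
  have hcinv : c⁻¹ ∈ alternatingGroup C := inv_mem hc.mem_alternatingGroup
  have h1 : Realizable (c⁻¹ : Equiv.Perm C) F := hF _ hcinv
  have h2 : Realizable β {x : ℤ → B | x k = b} := real_single k b β
  have := real_comm h1 h2
  have key : c⁻¹ * β * (c⁻¹)⁻¹ * β⁻¹ = c := by
    have h3 : c ^ 3 = 1 := by rw [← hc.orderOf]; exact pow_orderOf_eq_one c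
    have e : c⁻¹ * β * (c⁻¹)⁻¹ * β⁻¹ = c⁻¹ * (β * c * β⁻¹) := by group
    rw [e, hβ']
    calc c⁻¹ * c⁻¹ = c⁻¹ * c⁻¹ * c ^ 3 := by rw [h3, mul_one]
    _ = c := by group
  rwa [key] at this

lemma real_cylinder (t : Finset ℤ) (w : ℤ → B) :
    ∀ φ : Equiv.Perm C, φ ∈ alternatingGroup C →
      Realizable φ {x : ℤ → B | ∀ i ∈ t, x i = w i} := by
  classical
  induction t using Finset.induction_on with
  | empty =>
      intro φ _
      have h : {x : ℤ → B | ∀ i ∈ (∅ : Finset ℤ), x i = w i} = Set.univ := by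
        ext x; simp
      rw [h]
      exact real_univ φ
  | @insert i s hi IH =>
      intro φ hφ
      have hset : {x : ℤ → B | ∀ j ∈ insert i s, x j = w j} =
          {x : ℤ → B | ∀ j ∈ s, x j = w j} ∩ {x : ℤ → B | x i = w i} := by
        ext x
        simp only [Set.mem_inter_iff, Set.mem_setOf_eq, Finset.mem_insert]
        constructor
        · intro h; exact ⟨fun j hj => h j (Or.inr hj), h i (Or.inl rfl)⟩
        · rintro ⟨h1, h2⟩ j hj
          rcases hj with rfl | hj
          · exact h2
          · exact h1 j hj
      rw [hset]
      have hφ' : φ ∈ Subgroup.closure {σ : Equiv.Perm C | σ.IsThreeCycle} := by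
        rw [Equiv.Perm.closure_three_cycles_eq_alternating]; exact hφ
      refine Subgroup.closure_induction
        (p := fun ψ _ => Realizable ψ
          ({x : ℤ → B | ∀ j ∈ s, x j = w j} ∩ {x : ℤ → B | x i = w i}))
        (fun c hc => real_threeCycle hc i (w i) IH)
        (real_one _)
        (fun x y _ _ hx hy => real_mul hx hy)
        (fun x _ hx => real_inv hx) hφ'

end Stmt7Aux

namespace Stmt7Aux

open Equiv Equiv.Perm

variable {B C : Type} [Fintype B] [Fintype C] [DecidableEq C]

lemma real_biUnion {ι : Type} [DecidableEq ι] (φ : Equiv.Perm C) (G : ι → Set (ℤ → B))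
    (S : Finset ι) :
    (∀ a ∈ S, ∀ b ∈ S, a ≠ b → ∀ x, x ∈ G a → x ∉ G b) →
    (∀ a ∈ S, Realizable φ (G a)) →
    Realizable φ (⋃ a ∈ S, G a) := by
  induction S using Finset.induction_on with
  | empty =>
      intro _ _
      have h : (⋃ a ∈ (∅ : Finset ι), G a) = (∅ : Set (ℤ → B)) := by simp
      rw [h]; exact real_empty φ
  | @insert a S ha IH =>
      intro hd hr
      have h : (⋃ b ∈ insert a S, G b) = G a ∪ ⋃ b ∈ S, G b := by
        simp [Set.biUnion_insert]
      rw [h]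
      refine real_union ?_ (hr a (Finset.mem_insert_self a S)) ?_
      · intro x hxa hxU
        obtain ⟨b, hb, hxb⟩ := Set.mem_iUnion₂.mp hxU
        exact hd a (Finset.mem_insert_self a S) b (Finset.mem_insert_of_mem hb)
          (fun e => ha (e ▸ hb)) x hxa hxb
      · exact IH
          (fun b hb b' hb' hne => hd b (Finset.mem_insert_of_mem hb) b'
            (Finset.mem_insert_of_mem hb') hne)
          (fun b hb => hr b (Finset.mem_insert_of_mem hb))

lemma exists_locality (F : Set (ℤ → B)) (hF : IsClopen F) :
    ∃ t : Finset ℤ, ∀ x y : ℤ → B, (∀ i ∈ t, x i = y i) → x ∈ F → y ∈ F := by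
  classical
  haveI : DiscreteTopology B := ⟨rfl⟩
  set U : (ℤ → B) → Set (ℤ → B) := fun x => if x ∈ F then F else Fᶜ with hU
  have hUopen : ∀ x, IsOpen (U x) := by
    intro x
    by_cases h : x ∈ F <;> simp [hU, h, hF.isOpen, hF.isClosed.isOpen_compl]
  have hxU : ∀ x, x ∈ U x := by
    intro x
    by_cases h : x ∈ F <;> simp [hU, h]
  choose I u hIu hsub using fun x => (isOpen_pi_iff.mp (hUopen x)) x (hxU x)
  set V : (ℤ → B) → Set (ℤ → B) := fun x => {y | ∀ i ∈ I x, y i = x i} with hV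
  have hVsub : ∀ x, V x ⊆ U x := by
    intro x y hy
    refine hsub x ?_
    intro i hi
    rw [hV] at hy
    simp only [Set.mem_setOf_eq] at hy
    rw [hy i hi]
    exact (hIu x i hi).2
  have hVopen : ∀ x, IsOpen (V x) := by
    intro x
    have : V x = ⋂ i ∈ I x, (fun y : ℤ → B => y i) ⁻¹' {x i} := by
      ext y; simp [hV]
    rw [this]
    exact isOpen_biInter_finset fun i _ =>
      (continuous_apply i).isOpen_preimage _ (isOpen_discrete _)
  have hcover : (Set.univ : Set (ℤ → B)) ⊆ ⋃ x, V x := by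
    intro x _
    exact Set.mem_iUnion.2 ⟨x, fun i _ => rfl⟩
  obtain ⟨s, hs⟩ := isCompact_univ.elim_finite_subcover V hVopen hcover
  refine ⟨s.biUnion I, ?_⟩
  intro x y hxy hxF
  obtain ⟨x₀, hx₀s, hxV⟩ := Set.mem_iUnion₂.mp (hs (Set.mem_univ x))
  have hx₀F : x₀ ∈ F := by
    by_contra h
    have : U x₀ = Fᶜ := by simp [hU, h]
    exact (this ▸ hVsub x₀ hxV) hxF
  have hUF : U x₀ = F := by simp [hU, hx₀F]
  have hyV : y ∈ V x₀ := by
    intro i hi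
    rw [← hxy i (Finset.mem_biUnion.2 ⟨x₀, hx₀s, hi⟩)]
    exact hxV i hi
  exact hUF ▸ hVsub x₀ hyV

end Stmt7Aux

/-- for `|B| ≥ 2`, `|C| ≥ 2`, every even permutation `φ` of `C` and every clopen
`F ⊆ ℤ → B`, the map `ctrl(φ, F)` underlies an element of `PAut[B;C]`. -/
theorem stmt7 (B C : Type) [Fintype B] [Fintype C] [DecidableEq C]
    (hB : 2 ≤ Fintype.card B) (hC : 2 ≤ Fintype.card C)
    (φ : Equiv.Perm C) (hφ : φ ∈ alternatingGroup C)
    (F : Set (ℤ → B)) (hF : IsClopen F) :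
    ∃ f : Equiv.Perm (ℤ → B × C), f ∈ PAut B C ∧ ⇑f = ctrlSymb φ F := by
  classical
  obtain ⟨t, ht⟩ := Stmt7Aux.exists_locality F hF
  have hBne : Nonempty B := Fintype.card_pos_iff.mp (by omega)
  obtain ⟨b₀⟩ := hBne
  set ex : ({i // i ∈ t} → B) → (ℤ → B) :=
    fun u i => if h : i ∈ t then u ⟨i, h⟩ else b₀ with hex
  set G : ({i // i ∈ t} → B) → Set (ℤ → B) :=
    fun u => {x | ∀ i ∈ t, x i = ex u i} with hG
  set S : Finset ({i // i ∈ t} → B) :=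
    Finset.univ.filter (fun u => ex u ∈ F) with hS
  have hFeq : F = ⋃ u ∈ S, G u := by
    ext x
    constructor
    · intro hx
      have hagree : ∀ i ∈ t, x i = ex (fun i => x i.1) i := by
        intro i hi
        simp [hex, dif_pos hi]
      have hu : ex (fun i => x i.1) ∈ F := ht x _ hagree hx
      refine Set.mem_iUnion₂.mpr ⟨fun i => x i.1, ?_, ?_⟩
      · simp [hS, hu]
      · exact hagree
    · intro hx
      obtain ⟨u, hu, hxu⟩ := Set.mem_iUnion₂.mp hx
      have huF : ex u ∈ F := by
        rw [hS] at hu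
        simpa using hu
      exact ht (ex u) x (fun i hi => (hxu i hi).symm) huF
  have hdisj : ∀ a ∈ S, ∀ b ∈ S, a ≠ b → ∀ x, x ∈ G a → x ∉ G b := by
    intro a _ b _ hab x hxa hxb
    obtain ⟨i, hi⟩ := Function.ne_iff.mp hab
    apply hi
    have h1 : x i.1 = ex a i.1 := hxa i.1 i.2
    have h2 : x i.1 = ex b i.1 := hxb i.1 i.2
    have e1 : ex a i.1 = a i := by simp [hex, dif_pos i.2]
    have e2 : ex b i.1 = b i := by simp [hex, dif_pos i.2]
    rw [← e1, ← h1, h2, e2]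
  have hreal : Stmt7Aux.Realizable φ (⋃ u ∈ S, G u) :=
    Stmt7Aux.real_biUnion φ G S hdisj
      (fun u _ => Stmt7Aux.real_cylinder t (ex u) φ hφ)
  rw [hFeq]
  exact hreal
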